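/- Let F ≥ 2 and S ≥ 1 be integers and let d = gcd(F,S). Then a (K, F, F−2, S)-PDA exists with K = ((F−1)·(S−1) + d − 1)/2; i.e., K_{(F,2,S)} ≥ (F−1)(S−1)/2 + (d−1)/2. -/

import Mathlib

/-- A `(K, F, Z, S)` placement delivery array: an `F × K` array over
`{0, …, S-1} ∪ {*}` (with `none` playing the role of `*`) such that
(1) each integer occurs at most once in each row and in each column,
(2) whenever two distinct cells `(a, b)` and `(c, d)` contain the same
integer, the opposite corners `(a, d)` and `(c, b)` contain `*`, and
(3) the symbol `*` occurs exactly `Z` times in each column. -/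
def IsPDA (K F Z S : ℕ) (P : Fin F → Fin K → Option (Fin S)) : Prop :=
  (∀ (i : Fin F) (j j' : Fin K) (s : Fin S), P i j = some s → P i j' = some s → j = j') ∧
  (∀ (i i' : Fin F) (j : Fin K) (s : Fin S), P i j = some s → P i' j = some s → i = i') ∧
  (∀ (a c : Fin F) (b d : Fin K) (s : Fin S),
      (a, b) ≠ (c, d) → P a b = some s → P c d = some s →
      P a d = none ∧ P c b = none) ∧
  (∀ j : Fin K, (Finset.univ.filter (fun i => P i j = none)).card = Z)

/-- There exists a `(K, F, Z, S)` placement delivery array. -/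
def PDAExists (K F Z S : ℕ) : Prop :=
  ∃ P : Fin F → Fin K → Option (Fin S), IsPDA K F Z S P

namespace PDA2

abbrev Col := (ℕ × ℕ) × (ℕ × ℕ)

/-- Base pairs at one level of the recursion. `W` is the row step. -/
def bp (W S q r : ℕ) : List Col :=
  (List.range S).flatMap fun s =>
    (List.range s).flatMap fun u =>
      (List.range (q + if s < r then 1 else 0)).map fun k =>
        ((u + k * W, s), (s + k * W, u))

/-- Center sets: `sig F S b` is the set of symbols for which row `b` is a center. -/
def sig : ℕ → ℕ → ℕ → Finset ℕ
  | F, S, b =>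
    if _hS : S = 0 then ∅
    else
      insert (b % S)
        (if _hr : F % S = 0 then ∅
         else if F / S * S ≤ b then
           (sig (F % S) (S - F % S) (b - F / S * S)).image (· + F % S)
         else ∅)
termination_by F S b => S
decreasing_by omega

/-- The list of columns of the PDA. -/
def buildM : ℕ → ℕ → List Col
  | F, S =>
    if _hS : S = 0 then []
    else
      bp S S (F / S) (F % S) ++
        (if _hr : F % S = 0 then []
         else
           (buildM (F % S) (S - F % S)).map fun p =>
             ((F / S * S + p.1.1, p.1.2 + F % S), (F / S * S + p.2.1, p.2.2 + F % S)))
termination_by F S => S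
decreasing_by omega

theorem sig_eq (F : ℕ) {S : ℕ} (hS : S ≠ 0) (b : ℕ) :
    sig F S b = insert (b % S)
      (if F % S = 0 then (∅ : Finset ℕ)
       else if F / S * S ≤ b then
         (sig (F % S) (S - F % S) (b - F / S * S)).image (· + F % S)
       else ∅) := by
  rw [sig]
  rw [dif_neg hS]
  by_cases hr : F % S = 0
  · rw [dif_pos hr, if_pos hr]
  · rw [dif_neg hr, if_neg hr]

theorem mem_sig {F S b x : ℕ} (hS : S ≠ 0) :
    x ∈ sig F S b ↔ x = b % S ∨
      (F % S ≠ 0 ∧ F / S * S ≤ b ∧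
        ∃ y ∈ sig (F % S) (S - F % S) (b - F / S * S), y + F % S = x) := by
  rw [sig_eq F hS b]
  by_cases hr : F % S = 0
  · simp [hr]
  · by_cases hb : F / S * S ≤ b
    · simp [hr, hb, Finset.mem_insert, Finset.mem_image]
    · simp [hr, hb]

theorem mem_bp {W S q r : ℕ} {p : Col} :
    p ∈ bp W S q r ↔ ∃ s, s < S ∧ ∃ u, u < s ∧ ∃ k, k < q + (if s < r then 1 else 0) ∧
      ((u + k * W, s), (s + k * W, u)) = p := by
  simp only [bp, List.mem_flatMap, List.mem_map, List.mem_range]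

theorem decode {S u u' k k' : ℕ} (hu : u < S) (hu' : u' < S)
    (h : u + k * S = u' + k' * S) : u = u' ∧ k = k' := by
  have hS0 : 0 < S := by omega
  have h1 : (u + k * S) % S = u := by
    rw [Nat.add_mul_mod_self_right, Nat.mod_eq_of_lt hu]
  have h2 : (u' + k' * S) % S = u' := by
    rw [Nat.add_mul_mod_self_right, Nat.mod_eq_of_lt hu']
  have huu : u = u' := by rw [← h1, ← h2, h]
  refine ⟨huu, ?_⟩
  have : k * S = k' * S := by omega
  exact Nat.eq_of_mul_eq_mul_right hS0 this

def Inv (F S : ℕ) (p : Col) : Prop :=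
  p.1.1 < F ∧ p.2.1 < F ∧ p.1.2 < S ∧ p.2.2 < S ∧
  p.1.2 ∉ sig F S p.1.1 ∧ p.2.2 ∉ sig F S p.2.1 ∧
  p.1.2 ∈ sig F S p.2.1 ∧ p.2.2 ∈ sig F S p.1.1

def Disj (p q : Col) : Prop := p.1 ≠ q.1 ∧ p.1 ≠ q.2 ∧ p.2 ≠ q.1 ∧ p.2 ≠ q.2

theorem Disj.symm' {p q : Col} (h : Disj p q) : Disj q p :=
  ⟨h.1.symm, h.2.2.1.symm, h.2.1.symm, h.2.2.2.symm⟩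

theorem cells_ne {S u s k u' s' k' : ℕ} (hus : u < s) (hsS : s < S)
    (hus' : u' < s') (hsS' : s' < S)
    (hne : ¬(s = s' ∧ u = u' ∧ k = k')) :
    Disj ((u + k * S, s), (s + k * S, u)) ((u' + k' * S, s'), (s' + k' * S, u')) := by
  refine ⟨?_, ?_, ?_, ?_⟩ <;> intro h <;>
    simp only [Prod.mk.injEq] at h <;> obtain ⟨hrow, hsym⟩ := h
  · obtain ⟨e1, e2⟩ := decode (by omega) (by omega) hrow
    exact hne ⟨hsym, e1, e2⟩
  · obtain ⟨e1, e2⟩ := decode (by omega) (by omega) hrow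
    omega
  · obtain ⟨e1, e2⟩ := decode (by omega) (by omega) hrow
    omega
  · obtain ⟨e1, e2⟩ := decode (by omega) (by omega) hrow
    exact hne ⟨e1, hsym, e2⟩

theorem pairwise_flatMap' {α β : Type*} {R : β → β → Prop} {f : α → List β} {l : List α}
    (h1 : ∀ a ∈ l, (f a).Pairwise R)
    (h2 : l.Pairwise fun a b => ∀ x ∈ f a, ∀ y ∈ f b, R x y) :
    (l.flatMap f).Pairwise R := by
  rw [List.flatMap_def, List.pairwise_flatten]
  constructor
  · intro m hm
    rw [List.mem_map] at hm
    obtain ⟨a, ha, rfl⟩ := hm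
    exact h1 a ha
  · rw [List.pairwise_map]
    exact h2

theorem buildM_inv : ∀ S F, ∀ p ∈ buildM F S, Inv F S p := by
  intro S
  induction S using Nat.strong_induction_on with
  | _ S IH =>
    intro F p hp
    by_cases hS0 : S = 0
    · rw [buildM, dif_pos hS0] at hp; simp at hp
    rw [buildM, dif_neg hS0] at hp
    have hqr : F / S * S + F % S = F := by
      rw [Nat.mul_comm]; exact Nat.div_add_mod F S
    have hrS : F % S < S := Nat.mod_lt F (by omega)
    rcases List.mem_append.1 hp with hp | hp
    · -- base pairs
      obtain ⟨s, hsS, u, hus, k, hk, rfl⟩ := mem_bp.1 hp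
      have hcase : k < F / S ∨ (k = F / S ∧ s < F % S) := by
        by_cases h : s < F % S <;> simp [h] at hk <;> omega
      have hkS : k < F / S → k * S + S ≤ F / S * S := by
        intro h
        have := Nat.mul_le_mul_right S h
        rw [Nat.succ_mul] at this
        omega
      have hrow1 : u + k * S < F := by
        rcases hcase with h | ⟨h, h2⟩
        · have := hkS h; omega
        · subst h; omega
      have hrow2 : s + k * S < F := by
        rcases hcase with h | ⟨h, h2⟩
        · have := hkS h; omega
        · subst h; omega
      have hmodu : (u + k * S) % S = u := by
        rw [Nat.add_mul_mod_self_right, Nat.mod_eq_of_lt (by omega)]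
      have hmods : (s + k * S) % S = s := by
        rw [Nat.add_mul_mod_self_right, Nat.mod_eq_of_lt (by omega)]
      have h5 : s ∉ sig F S (u + k * S) := by
        rw [mem_sig hS0]
        rintro (h | ⟨hr0, hle, y, hy, hyx⟩)
        · omega
        · rcases hcase with h | ⟨h, h2⟩
          · have := hkS h; omega
          · omega
      have h6 : u ∉ sig F S (s + k * S) := by
        rw [mem_sig hS0]
        rintro (h | ⟨hr0, hle, y, hy, hyx⟩)
        · omega
        · rcases hcase with h | ⟨h, h2⟩
          · have := hkS h; omega
          · omega
      have h7 : s ∈ sig F S (s + k * S) := by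
        rw [mem_sig hS0]; left; omega
      have h8 : u ∈ sig F S (u + k * S) := by
        rw [mem_sig hS0]; left; omega
      exact ⟨hrow1, hrow2, hsS, hus.trans hsS, h5, h6, h7, h8⟩
    · -- recursive part
      by_cases hr : F % S = 0
      · rw [dif_pos hr] at hp; simp at hp
      rw [dif_neg hr] at hp
      obtain ⟨p', hp', rfl⟩ := List.mem_map.1 hp
      obtain ⟨hb, ha, hs, ht, hns, hnt, hms, hmt⟩ :=
        IH (S - F % S) (by omega) (F % S) p' hp'
      have hmod : ∀ x : ℕ, x < F % S → (F / S * S + x) % S = x := by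
        intro x hx
        rw [Nat.add_comm, Nat.add_mul_mod_self_right, Nat.mod_eq_of_lt (by omega)]
      have hsub : ∀ x : ℕ, F / S * S + x - F / S * S = x := by omega
      have r1 : F / S * S + p'.1.1 < F := by omega
      have r2 : F / S * S + p'.2.1 < F := by omega
      have r5 : p'.1.2 + F % S ∉ sig F S (F / S * S + p'.1.1) := by
        rw [mem_sig hS0]
        rintro (h | ⟨hr0, hle, y, hy, hyx⟩)
        · rw [hmod _ hb] at h; omega
        · rw [hsub] at hy
          have : y = p'.1.2 := by omega
          subst this; exact hns hy
      have r6 : p'.2.2 + F % S ∉ sig F S (F / S * S + p'.2.1) := by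
        rw [mem_sig hS0]
        rintro (h | ⟨hr0, hle, y, hy, hyx⟩)
        · rw [hmod _ ha] at h; omega
        · rw [hsub] at hy
          have : y = p'.2.2 := by omega
          subst this; exact hnt hy
      have r7 : p'.1.2 + F % S ∈ sig F S (F / S * S + p'.2.1) := by
        rw [mem_sig hS0]; right
        exact ⟨hr, by omega, p'.1.2, by rw [hsub]; exact hms, rfl⟩
      have r8 : p'.2.2 + F % S ∈ sig F S (F / S * S + p'.1.1) := by
        rw [mem_sig hS0]; right
        exact ⟨hr, by omega, p'.2.2, by rw [hsub]; exact hmt, rfl⟩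
      have r3 : p'.1.2 + F % S < S := by omega
      have r4 : p'.2.2 + F % S < S := by omega
      exact ⟨r1, r2, r3, r4, r5, r6, r7, r8⟩

theorem bp_pairwise (S q r : ℕ) : (bp S S q r).Pairwise Disj := by
  apply pairwise_flatMap'
  · intro s hs
    rw [List.mem_range] at hs
    apply pairwise_flatMap'
    · intro u hu
      rw [List.mem_range] at hu
      rw [List.pairwise_map]
      exact (List.pairwise_lt_range (n := _)).imp
        (fun h => cells_ne hu hs hu hs (by omega))
    · refine List.Pairwise.imp_of_mem ?_ (List.pairwise_lt_range (n := s))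
      intro u u' hu hu' huu x hx y hy
      rw [List.mem_range] at hu hu'
      rw [List.mem_map] at hx hy
      obtain ⟨k, hk, rfl⟩ := hx
      obtain ⟨k', hk', rfl⟩ := hy
      exact cells_ne hu hs hu' hs (by omega)
  · refine List.Pairwise.imp_of_mem ?_ (List.pairwise_lt_range (n := S))
    intro s s' hsm hsm' hss x hx y hy
    rw [List.mem_range] at hsm hsm'
    rw [List.mem_flatMap] at hx hy
    obtain ⟨u, hu, hx⟩ := hx
    obtain ⟨u', hu', hy⟩ := hy
    rw [List.mem_range] at hu hu'
    rw [List.mem_map] at hx hy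
    obtain ⟨k, hk, rfl⟩ := hx
    obtain ⟨k', hk', rfl⟩ := hy
    exact cells_ne hu hsm hu' hsm' (by omega)

theorem buildM_pairwise : ∀ S F, (buildM F S).Pairwise Disj := by
  intro S
  induction S using Nat.strong_induction_on with
  | _ S IH =>
    intro F
    by_cases hS0 : S = 0
    · rw [buildM, dif_pos hS0]; exact List.Pairwise.nil
    rw [buildM, dif_neg hS0]
    have hqr : F / S * S + F % S = F := by
      rw [Nat.mul_comm]; exact Nat.div_add_mod F S
    have hrS : F % S < S := Nat.mod_lt F (by omega)
    rw [List.pairwise_append]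
    refine ⟨bp_pairwise S (F / S) (F % S), ?_, ?_⟩
    · by_cases hr : F % S = 0
      · rw [dif_pos hr]; exact List.Pairwise.nil
      rw [dif_neg hr, List.pairwise_map]
      apply (IH (S - F % S) (by omega) (F % S)).imp
      intro p p' h
      refine ⟨?_, ?_, ?_, ?_⟩ <;> intro he <;>
        simp only [Prod.mk.injEq] at he
      · exact h.1 (by rw [Prod.ext_iff]; omega)
      · exact h.2.1 (by rw [Prod.ext_iff]; omega)
      · exact h.2.2.1 (by rw [Prod.ext_iff]; omega)
      · exact h.2.2.2 (by rw [Prod.ext_iff]; omega)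
    · intro a ha b hb
      by_cases hr : F % S = 0
      · rw [dif_pos hr] at hb; simp at hb
      rw [dif_neg hr] at hb
      obtain ⟨s, hsS, u, hus, k, hk, rfl⟩ := mem_bp.1 ha
      obtain ⟨p', hp', rfl⟩ := List.mem_map.1 hb
      obtain ⟨hb', ha', hs', ht', _, _, _, _⟩ :=
        buildM_inv (S - F % S) (F % S) p' hp'
      have hcase : k < F / S ∨ (k = F / S ∧ s < F % S) := by
        by_cases h : s < F % S <;> simp [h] at hk <;> omega
      have hkS : k < F / S → k * S + S ≤ F / S * S := by
        intro h
        have := Nat.mul_le_mul_right S h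
        rw [Nat.succ_mul] at this
        omega
      rcases hcase with h | ⟨h, h2⟩
      · have h3 := hkS h
        refine ⟨?_, ?_, ?_, ?_⟩ <;> intro he <;>
          simp only [Prod.mk.injEq] at he <;> omega
      · subst h
        refine ⟨?_, ?_, ?_, ?_⟩ <;> intro he <;>
          simp only [Prod.mk.injEq] at he <;> omega

theorem flatMap_const_len {α : Type*} (n c : ℕ) (g : ℕ → ℕ → α) :
    ((List.range n).flatMap fun u => (List.range c).map (g u)).length = n * c := by
  induction n with
  | zero => simp
  | succ m ih =>
    rw [List.range_succ, List.flatMap_append, List.length_append, ih]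
    simp only [List.flatMap_cons, List.flatMap_nil, List.append_nil, List.length_map,
      List.length_range]
    ring

theorem bp_block_len (W q r s : ℕ) :
    ((List.range s).flatMap fun u =>
      (List.range (q + if s < r then 1 else 0)).map fun k =>
        (((u + k * W, s), (s + k * W, u)) : Col)).length
      = s * (q + if s < r then 1 else 0) :=
  flatMap_const_len s _ _

theorem bp_len (W S q r : ℕ) :
    2 * (bp W S q r).length = q * (S * (S - 1)) + min S r * (min S r - 1) := by
  induction S with
  | zero => simp [bp]
  | succ n ih =>
    have hstep : bp W (n + 1) q r = bp W n q r ++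
        ((List.range n).flatMap fun u =>
          (List.range (q + if n < r then 1 else 0)).map fun k =>
            (((u + k * W, n), (n + k * W, u)) : Col)) := by
      rw [bp, List.range_succ, List.flatMap_append]
      rw [bp]
      simp
    rw [hstep, List.length_append, bp_block_len]
    by_cases h : n < r
    · rw [if_pos h]
      have h1 : min n r = n := by omega
      have h2 : min (n + 1) r = n + 1 := by omega
      rw [h1] at ih
      rw [h2]
      cases n with
      | zero => simp [bp]
      | succ m =>
        rw [show m + 1 - 1 = m from rfl] at ih
        rw [show m + 1 + 1 - 1 = m + 1 from rfl]
        zify at ih ⊢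
        linear_combination ih
    · rw [if_neg h]
      have h1 : min n r = r := by omega
      have h2 : min (n + 1) r = r := by omega
      rw [h1] at ih
      rw [h2]
      cases n with
      | zero =>
        have : r = 0 := by omega
        subst this
        simpa [bp] using ih
      | succ m =>
        rw [show m + 1 - 1 = m from rfl] at ih
        rw [show m + 1 + 1 - 1 = m + 1 from rfl]
        zify at ih ⊢
        linear_combination ih

theorem buildM_len : ∀ S F, 1 ≤ F → 1 ≤ S →
    2 * (buildM F S).length = (F - 1) * (S - 1) + Nat.gcd F S - 1 := by
  intro S
  induction S using Nat.strong_induction_on with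
  | _ S IH =>
    intro F hF hS
    have hS0 : S ≠ 0 := by omega
    rw [buildM, dif_neg hS0]
    have hqr : F / S * S + F % S = F := by
      rw [Nat.mul_comm]; exact Nat.div_add_mod F S
    have hrS : F % S < S := Nat.mod_lt F (by omega)
    rw [List.length_append]
    have hbp := bp_len S S (F / S) (F % S)
    by_cases hr : F % S = 0
    · rw [dif_pos hr]
      rw [hr] at hbp hqr ⊢
      simp only [Nat.min_zero, Nat.zero_mul, Nat.add_zero] at hbp
      have hgcd : Nat.gcd F S = S := Nat.gcd_eq_right (Nat.dvd_of_mod_eq_zero hr)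
      rw [hgcd]
      simp only [List.length_nil, Nat.add_zero]
      have hside : 1 ≤ (F - 1) * (S - 1) + S := by
        have : 0 ≤ (F - 1) * (S - 1) := Nat.zero_le _
        omega
      zify [show 1 ≤ S from hS, show 1 ≤ F from hF, hside] at hbp ⊢
      zify at hqr
      linear_combination hbp + ((S : ℤ) - 1) * hqr
    · rw [dif_neg hr, List.length_map]
      have hrec := IH (S - F % S) (by omega) (F % S) (by omega) (by omega)
      have hmin : min S (F % S) = F % S := by omega
      rw [hmin] at hbp
      have hg1 : Nat.gcd F S = Nat.gcd (F % S) S := by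
        rw [Nat.gcd_comm, Nat.gcd_rec]
      have hg2 : Nat.gcd (F % S) (S - F % S) = Nat.gcd (F % S) S := by
        have h := Nat.gcd_add_self_right (F % S) (S - F % S)
        rw [show S - F % S + F % S = S by omega] at h
        exact h.symm
      have hgpos : 1 ≤ Nat.gcd (F % S) S := Nat.gcd_pos_of_pos_left S (by omega)
      rw [hg2] at hrec
      rw [hg1]
      have hside1 : 1 ≤ (F % S - 1) * (S - F % S - 1) + Nat.gcd (F % S) S := by omega
      have hside2 : 1 ≤ (F - 1) * (S - 1) + Nat.gcd (F % S) S := by omega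
      zify [show 1 ≤ S from hS, show 1 ≤ F from hF, show 1 ≤ F % S by omega,
        show F % S ≤ S by omega, show 1 ≤ S - F % S by omega, hgpos, hside1, hside2]
        at hbp hrec ⊢
      zify at hqr
      linear_combination hbp + hrec + ((S : ℤ) - 1) * hqr

end PDA2

theorem pda_lower_bound_K_Z_eq_F_sub_two (F S : ℕ) (hF : 2 ≤ F) (hS : 1 ≤ S)
    (d : ℕ) (hd : d = Nat.gcd F S) :
    PDAExists (((F - 1) * (S - 1) + d - 1) / 2) F (F - 2) S := by
  classical
  have hS0 : 0 < S := hS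
  set M := PDA2.buildM F S with hM
  have hlen := PDA2.buildM_len S F (by omega) hS
  rw [← hM] at hlen
  have hinv : ∀ p ∈ M, PDA2.Inv F S p := PDA2.buildM_inv S F
  have hpw : M.Pairwise PDA2.Disj := PDA2.buildM_pairwise S F
  have hK : ((F - 1) * (S - 1) + d - 1) / 2 = M.length := by
    rw [hd]; omega
  rw [hK]
  set P : Fin F → Fin M.length → Option (Fin S) := fun i j =>
    if i.val = (M.get j).1.1 then some ⟨(M.get j).1.2 % S, Nat.mod_lt _ hS0⟩
    else if i.val = (M.get j).2.1 then some ⟨(M.get j).2.2 % S, Nat.mod_lt _ hS0⟩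
    else none with hP
  have hInv : ∀ j : Fin M.length, PDA2.Inv F S (M.get j) := fun j =>
    hinv _ (List.get_mem M j)
  have hrowsne : ∀ j, (M.get j).1.1 ≠ (M.get j).2.1 := by
    intro j h
    exact (hInv j).2.2.2.2.1 (h ▸ (hInv j).2.2.2.2.2.2.1)
  have hsymsne : ∀ j, (M.get j).1.2 ≠ (M.get j).2.2 := by
    intro j h
    exact (hInv j).2.2.2.2.1 (h ▸ (hInv j).2.2.2.2.2.2.2)
  have hdisj : ∀ j j' : Fin M.length, j ≠ j' → PDA2.Disj (M.get j) (M.get j') := by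
    intro j j' hne
    rcases lt_or_gt_of_ne hne with h | h
    · exact List.pairwise_iff_get.1 hpw j j' h
    · exact (List.pairwise_iff_get.1 hpw j' j h).symm'
  have hPsome : ∀ (i : Fin F) (j) (s : Fin S), P i j = some s ↔
      ((i.val, s.val) = (M.get j).1 ∨ (i.val, s.val) = (M.get j).2) := by
    intro i j s
    have h12 : (M.get j).1.2 < S := (hInv j).2.2.1
    have h22 : (M.get j).2.2 < S := (hInv j).2.2.2.1
    rw [hP]
    simp only []
    split_ifs with h1 h2
    · constructor
      · intro hh
        have hv := Option.some.inj hh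
        left
        rw [Prod.ext_iff]
        refine ⟨h1, ?_⟩
        rw [← hv]
        exact Nat.mod_eq_of_lt h12
      · rintro (hc | hc) <;> rw [Prod.ext_iff] at hc
        · congr 1
          apply Fin.ext
          show (M.get j).1.2 % S = s.val
          rw [Nat.mod_eq_of_lt h12]
          exact hc.2.symm
        · exact absurd (h1.symm.trans hc.1) (hrowsne j)
    · constructor
      · intro hh
        have hv := Option.some.inj hh
        right
        rw [Prod.ext_iff]
        refine ⟨h2, ?_⟩
        rw [← hv]
        exact Nat.mod_eq_of_lt h22
      · rintro (hc | hc) <;> rw [Prod.ext_iff] at hc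
        · exact absurd hc.1 h1
        · congr 1
          apply Fin.ext
          show (M.get j).2.2 % S = s.val
          rw [Nat.mod_eq_of_lt h22]
          exact hc.2.symm
    · constructor
      · intro hh; cases hh
      · rintro (hc | hc) <;> rw [Prod.ext_iff] at hc
        · exact absurd hc.1 h1
        · exact absurd hc.1 h2
  have hPnone : ∀ (i : Fin F) (j), P i j = none ↔
      i.val ≠ (M.get j).1.1 ∧ i.val ≠ (M.get j).2.1 := by
    intro i j
    rw [hP]
    simp only []
    split_ifs with h1 h2
    · exact iff_of_false (by simp) (fun hc => hc.1 h1)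
    · exact iff_of_false (by simp) (fun hc => hc.2 h2)
    · exact iff_of_true rfl ⟨h1, h2⟩
  have key : ∀ (j j' : Fin M.length) (x y : ℕ), j ≠ j' →
      ((x, y) = (M.get j).1 ∨ (x, y) = (M.get j).2) →
      (∃ z, (z, y) = (M.get j').1 ∨ (z, y) = (M.get j').2) →
      x ≠ (M.get j').1.1 ∧ x ≠ (M.get j').2.1 := by
    intro j j' x y hne hc hc'
    obtain ⟨z, hc'⟩ := hc'
    have hd1 := hdisj j j' hne
    have I := hInv j
    have I' := hInv j'
    have hysig : y ∉ PDA2.sig F S x := by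
      rcases hc with hc | hc
      · have := I.2.2.2.2.1
        rw [← hc] at this
        exact this
      · have := I.2.2.2.2.2.1
        rw [← hc] at this
        exact this
    constructor
    · intro hx
      rcases hc' with hc' | hc'
      · -- (x, y) = (M.get j').1, contradicting Disj
        have hcell : (x, y) = (M.get j').1 := by
          rw [Prod.ext_iff] at hc' ⊢
          exact ⟨hx, hc'.2⟩
        rcases hc with hc | hc
        · exact hd1.1 (hc.symm.trans hcell)
        · exact hd1.2.2.1 (hc.symm.trans hcell)
      · -- y is the second symbol of column j', so y ∈ sig F S (M.get j').1.1 = sig x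
        have hmem := I'.2.2.2.2.2.2.2
        rw [← hx] at hmem
        have hy2 : y = (M.get j').2.2 := by
          rw [Prod.ext_iff] at hc'
          exact hc'.2
        rw [← hy2] at hmem
        exact hysig hmem
    · intro hx
      rcases hc' with hc' | hc'
      · have hmem := I'.2.2.2.2.2.2.1
        rw [← hx] at hmem
        have hy2 : y = (M.get j').1.2 := by
          rw [Prod.ext_iff] at hc'
          exact hc'.2
        rw [← hy2] at hmem
        exact hysig hmem
      · have hcell : (x, y) = (M.get j').2 := by
          rw [Prod.ext_iff] at hc' ⊢
          exact ⟨hx, hc'.2⟩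
        rcases hc with hc | hc
        · exact hd1.2.1 (hc.symm.trans hcell)
        · exact hd1.2.2.2 (hc.symm.trans hcell)
  refine ⟨P, ?_, ?_, ?_, ?_⟩
  · -- each symbol at most once per row
    intro i j j' s h h'
    by_contra hne
    have hd1 := hdisj j j' hne
    rcases (hPsome i j s).1 h with hc | hc <;>
      rcases (hPsome i j' s).1 h' with hc' | hc'
    · exact hd1.1 (hc.symm.trans hc')
    · exact hd1.2.1 (hc.symm.trans hc')
    · exact hd1.2.2.1 (hc.symm.trans hc')
    · exact hd1.2.2.2 (hc.symm.trans hc')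
  · -- each symbol at most once per column
    intro i i' j s h h'
    rcases (hPsome i j s).1 h with hc | hc <;>
      rcases (hPsome i' j s).1 h' with hc' | hc' <;>
      rw [Prod.ext_iff] at hc hc'
    · exact Fin.ext (by omega)
    · exact absurd (by omega : (M.get j).1.2 = (M.get j).2.2) (hsymsne j)
    · exact absurd (by omega : (M.get j).1.2 = (M.get j).2.2) (hsymsne j)
    · exact Fin.ext (by omega)
  · -- the cross condition
    intro a c b dd s hne h h'
    by_cases hbd : b = dd
    · subst hbd
      exfalso
      rcases (hPsome a b s).1 h with hc | hc <;>
        rcases (hPsome c b s).1 h' with hc' | hc' <;>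
        rw [Prod.ext_iff] at hc hc'
      · exact hne (by rw [show a = c from Fin.ext (by omega)])
      · exact absurd (by omega : (M.get b).1.2 = (M.get b).2.2) (hsymsne b)
      · exact absurd (by omega : (M.get b).1.2 = (M.get b).2.2) (hsymsne b)
      · exact hne (by rw [show a = c from Fin.ext (by omega)])
    · have hc := (hPsome a b s).1 h
      have hc' := (hPsome c dd s).1 h'
      constructor
      · rw [hPnone]
        exact key b dd a.val s.val hbd hc ⟨c.val, hc'⟩
      · rw [hPnone]
        exact key dd b c.val s.val (Ne.symm hbd) hc' ⟨a.val, hc⟩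
  · -- exactly F - 2 stars per column
    intro j
    have hb : (M.get j).1.1 < F := (hInv j).1
    have ha : (M.get j).2.1 < F := (hInv j).2.1
    have hfilter : Finset.univ.filter (fun i : Fin F => P i j = none)
        = ({⟨(M.get j).1.1, hb⟩, ⟨(M.get j).2.1, ha⟩} : Finset (Fin F))ᶜ := by
      ext i
      simp only [Finset.mem_filter, Finset.mem_univ, true_and, Finset.mem_compl,
        Finset.mem_insert, Finset.mem_singleton, hPnone i j, Fin.ext_iff]
      tauto
    rw [hfilter, Finset.card_compl]
    have hcard : ({⟨(M.get j).1.1, hb⟩, ⟨(M.get j).2.1, ha⟩} : Finset (Fin F)).card = 2 := by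
      rw [Finset.card_insert_of_notMem, Finset.card_singleton]
      simp only [Finset.mem_singleton, Fin.ext_iff]
      exact hrowsne j
    rw [hcard, Fintype.card_fin]
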